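/- Let G be a connected plane graph with minimum degree at least 3 that contains no cycle of length 4, no cycle of length 7, no cycle of length 9, and no 5-cycle normally adjacent to a 3-cycle. Then no 3-face of G is adjacent to a 9-face of G. -/

import Mathlib

namespace Paper

open SimpleGraph

variable {V : Type*}

/-- The fixed-point-free involution on darts reversing each dart. -/
def dartFlip (G : SimpleGraph V) : Equiv.Perm G.Dart :=
  ⟨SimpleGraph.Dart.symm, SimpleGraph.Dart.symm,
    fun d => SimpleGraph.Dart.symm_symm d, fun d => SimpleGraph.Dart.symm_symm d⟩

/-- A combinatorial embedding (rotation system) of a simple graph: a permutation of the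
darts whose cycles are exactly the sets of darts emanating from a common vertex. -/
structure PlaneEmbedding (G : SimpleGraph V) where
  rot : Equiv.Perm G.Dart
  fst_rot : ∀ d : G.Dart, (rot d).fst = d.fst
  rot_cyclic : ∀ d e : G.Dart, d.fst = e.fst → rot.SameCycle d e

/-- The face permutation of a combinatorial embedding; its orbits are the (boundary walks
of the) faces of the embedding. -/
def PlaneEmbedding.facePerm {G : SimpleGraph V} (E : PlaneEmbedding G) : Equiv.Perm G.Dart :=
  E.rot * dartFlip G

/-- The face (as its set of boundary darts, i.e. the orbit of the face permutation)
containing a given dart. -/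
def faceOf {G : SimpleGraph V} (E : PlaneEmbedding G) (d : G.Dart) : Set G.Dart :=
  {e | E.facePerm.SameCycle d e}

/-- The length of the boundary walk of the face containing a given dart; a `k`-face is a
face whose boundary walk has length `k`, i.e. whose dart-orbit has size `k`. -/
noncomputable def faceSize {G : SimpleGraph V} (E : PlaneEmbedding G) (d : G.Dart) : ℕ :=
  (faceOf E d).ncard

/-- The number of faces of the embedding lying in a given connected component. -/
noncomputable def componentFaceCount {G : SimpleGraph V} (E : PlaneEmbedding G)
    (c : G.ConnectedComponent) : ℕ :=
  Nat.card (Quotient (Setoid.comap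
    (Subtype.val : {d : G.Dart // G.connectedComponentMk d.fst = c} → G.Dart)
    (Equiv.Perm.SameCycle.setoid E.facePerm)))

/-- The embedding is plane (genus zero): Euler's formula `V - E + F = 2` holds on each
connected component containing an edge (stated as `2V + 2F = #darts + 4`, using that the
number of darts is twice the number of edges). -/
def PlaneEmbedding.IsPlane {G : SimpleGraph V} (E : PlaneEmbedding G) : Prop :=
  ∀ c : G.ConnectedComponent, (∃ d : G.Dart, G.connectedComponentMk d.fst = c) →
    2 * {v : V | G.connectedComponentMk v = c}.ncard + 2 * componentFaceCount E c
      = {d : G.Dart | G.connectedComponentMk d.fst = c}.ncard + 4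

/-- `G` is a planar graph: it admits a plane (genus-zero) combinatorial embedding. -/
def IsPlanar (G : SimpleGraph V) : Prop :=
  ∃ E : PlaneEmbedding G, E.IsPlane

/-- `G` has no cycle of length `n`. -/
def NoCycleLen (G : SimpleGraph V) (n : ℕ) : Prop :=
  ∀ (v : V) (c : G.Walk v v), c.IsCycle → c.length ≠ n

/-- Two cycles (given as closed walks) are normally adjacent: their intersection is
isomorphic to `K₂`, i.e. they share exactly one edge together with its two endpoints. -/
def NormAdjWalks (G : SimpleGraph V) {a b : V} (c₁ : G.Walk a a) (c₂ : G.Walk b b) : Prop :=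
  ∃ x y : V, x ≠ y ∧ s(x, y) ∈ c₁.edges ∧ s(x, y) ∈ c₂.edges ∧
    (∀ z : V, (z ∈ c₁.support ∧ z ∈ c₂.support) ↔ (z = x ∨ z = y))

/-- `G` has no `5`-cycle normally adjacent to a `3`-cycle. -/
def No5CycleNormAdj3 (G : SimpleGraph V) : Prop :=
  ∀ (a b : V) (c₁ : G.Walk a a) (c₂ : G.Walk b b),
    c₁.IsCycle → c₁.length = 5 → c₂.IsCycle → c₂.length = 3 →
      ¬ NormAdjWalks G c₁ c₂

/-- `d` lists the boundary darts of a face in order, and this boundary is the closed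
walk `v 0, v 1, …, v (n-1), v 0`. -/
def FaceTraversal {G : SimpleGraph V} (E : PlaneEmbedding G) {n : ℕ}
    (v : ZMod n → V) (d : ZMod n → G.Dart) : Prop :=
  (∀ i, (d i).toProd = (v i, v (i + 1))) ∧ ∀ i, E.facePerm (d i) = d (i + 1)

/-- The cycle `v 0, v 1, …, v (n-1), v 0` (with distinct vertices) bounds a face of the
embedding (traversed in one of the two possible directions). -/
def CycleBoundsFace {G : SimpleGraph V} (E : PlaneEmbedding G) {n : ℕ}
    (v : ZMod n → V) : Prop :=
  Function.Injective v ∧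
    ((∃ d, FaceTraversal E v d) ∨ (∃ d, FaceTraversal E (fun i => v (-i)) d))

/-- The `i`-th vertex of the boundary walk of the face containing the dart `d0`. -/
def boundaryVert {G : SimpleGraph V} (E : PlaneEmbedding G) (d0 : G.Dart) (i : ℕ) : V :=
  ((E.facePerm ^ i) d0).fst

/-- The faces containing the darts `d1`, `d2` are adjacent: their boundaries share at
least one edge. -/
def FacesAdjacent {G : SimpleGraph V} (E : PlaneEmbedding G) (d1 d2 : G.Dart) : Prop :=
  ∃ e1 e2 : G.Dart, E.facePerm.SameCycle d1 e1 ∧ E.facePerm.SameCycle d2 e2 ∧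
    e1.edge = e2.edge

/-- The set of vertices on the boundary of the face containing the dart `d`. -/
def faceVerts {G : SimpleGraph V} (E : PlaneEmbedding G) (d : G.Dart) : Set V :=
  {x | ∃ e : G.Dart, E.facePerm.SameCycle d e ∧ e.fst = x}

/-- The set of edges on the boundary of the face containing the dart `d`. -/
def faceEdges {G : SimpleGraph V} (E : PlaneEmbedding G) (d : G.Dart) : Set (Sym2 V) :=
  {s | ∃ e : G.Dart, E.facePerm.SameCycle d e ∧ e.edge = s}

section Configs

variable [Fintype V]

/-- Configuration (1): a `10`-cycle bounding a face together with a `3`-cycle bounding a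
face, normally adjacent to it along one edge, all eleven vertices having degree `3`. -/
def Config1 (G : SimpleGraph V) [DecidableRel G.Adj] (E : PlaneEmbedding G) : Prop :=
  ∃ (v : ZMod 10 → V) (w : ZMod 3 → V) (u : V),
    CycleBoundsFace E v ∧ CycleBoundsFace E w ∧
    ({w 0, w 1, w 2} : Set V) = {v 0, v 1, u} ∧ u ∉ Set.range v ∧
    (∀ i, G.degree (v i) = 3) ∧ G.degree u = 3

/-- Configuration (2): two vertex-disjoint `10`-cycles `x₁…x₁₀` and `y₁…y₁₀` (indexed here
from `0`), each bounding a face, with edges `x₃y₃` and `x₁₀y₁₀`; all `xᵢ` have degree `3`,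
`y₃` and `y₁₀` have degree `4`, the other `yᵢ` have degree `3`. -/
def Config2 (G : SimpleGraph V) [DecidableRel G.Adj] (E : PlaneEmbedding G) : Prop :=
  ∃ x y : ZMod 10 → V,
    CycleBoundsFace E x ∧ CycleBoundsFace E y ∧
    Set.range x ∩ Set.range y = ∅ ∧
    G.Adj (x 2) (y 2) ∧ G.Adj (x 9) (y 9) ∧
    (∀ i, G.degree (x i) = 3) ∧
    G.degree (y 2) = 4 ∧ G.degree (y 9) = 4 ∧
    (∀ i, i ≠ 2 → i ≠ 9 → G.degree (y i) = 3)

/-- Configuration (3): an `8`-cycle bounding a face and a `5`-cycle bounding a face that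
are normally adjacent (sharing exactly one edge and its endpoints), all eleven vertices
having degree `3`. -/
def Config3 (G : SimpleGraph V) [DecidableRel G.Adj] (E : PlaneEmbedding G) : Prop :=
  ∃ (a : ZMod 8 → V) (b : ZMod 5 → V),
    CycleBoundsFace E a ∧ CycleBoundsFace E b ∧
    Set.range a ∩ Set.range b = {a 0, a 1} ∧
    (∃ j : ZMod 5, (b j = a 0 ∧ b (j + 1) = a 1) ∨ (b j = a 1 ∧ b (j + 1) = a 0)) ∧
    (∀ i, G.degree (a i) = 3) ∧ (∀ j, G.degree (b j) = 3)

end Configs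

open Classical in
/-- The function resulting from the operation `Delete_[u](G, f)`: every neighbour of `u`
loses one unit. -/
noncomputable def deleteFun (G : SimpleGraph V) (u : V) (f : V → ℤ) : V → ℤ :=
  fun v => if G.Adj u v then f v - 1 else f v

open Classical in
/-- The function resulting from the operation `DeleteSave_[u; w](G, f)`: every neighbour
of `u` except `w` loses one unit. -/
noncomputable def deleteSaveFun (G : SimpleGraph V) (u w : V) (f : V → ℤ) : V → ℤ :=
  fun v => if G.Adj u v ∧ v ≠ w then f v - 1 else f v

/-- All vertices of the subgraph of `G` induced on `S` can be removed by a sequence of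
legal applications of the `Delete` and `DeleteSave` operations, starting from the value
function `f`. -/
inductive WeaklyReducible (G : SimpleGraph V) : Set V → (V → ℤ) → Prop
  | empty (f : V → ℤ) : WeaklyReducible G ∅ f
  | delete (S : Set V) (f : V → ℤ) (u : V) (hu : u ∈ S)
      (hnn : ∀ v ∈ S \ {u}, 0 ≤ deleteFun G u f v)
      (h : WeaklyReducible G (S \ {u}) (deleteFun G u f)) : WeaklyReducible G S f
  | deleteSave (S : Set V) (f : V → ℤ) (u w : V) (hu : u ∈ S) (hw : w ∈ S \ {u})
      (hadj : G.Adj u w) (hlt : f w < f u)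
      (hnn : ∀ v ∈ S \ {u}, 0 ≤ deleteSaveFun G u w f v)
      (h : WeaklyReducible G (S \ {u}) (deleteSaveFun G u w f)) : WeaklyReducible G S f

/-- `G` is weakly `d`-degenerate: all its vertices can be removed by a sequence of legal
applications of the `Delete` and `DeleteSave` operations, starting from the constant
function of value `d`. -/
def WeaklyDegenerate (G : SimpleGraph V) (d : ℤ) : Prop :=
  WeaklyReducible G Set.univ (fun _ => d)

/-- The canonical cover of `G` with `s = 2`: two disjoint copies of `G`, on vertex set
`V × Fin 2`, with `(u, i)` adjacent to `(v, j)` iff `uv ∈ E(G)` and `i = j`. -/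
def canonicalCover2 (G : SimpleGraph V) : SimpleGraph (V × Fin 2) where
  Adj a b := G.Adj a.1 b.1 ∧ a.2 = b.2
  symm := ⟨fun _ _ h => ⟨h.1.symm, h.2.symm⟩⟩
  loopless := ⟨fun a h => G.irrefl h.1⟩

/-- `T` is a strictly `f`-degenerate transversal-candidate set: every nonempty subgraph
`K` of the induced subgraph `H[T]` has a vertex `x` with `deg_K x < f x`. -/
def StrictlyFDegenerateOn {W : Type*} (H : SimpleGraph W) (f : W → ℕ) (T : Set W) : Prop :=
  ∀ K : H.Subgraph, K.verts ⊆ T → K.verts.Nonempty →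
    ∃ x ∈ K.verts, Nat.card (K.neighborSet x) < f x

end Paper

open SimpleGraph

namespace Paper

open Equiv.Perm

section Helpers

variable {V : Type*} {G : SimpleGraph V}

private lemma c4F (h4 : ∀ (v : V) (c : G.Walk v v), c.IsCycle → c.length ≠ 4)
    {p q r s : V} (h1 : G.Adj p q) (h2 : G.Adj q r) (h3 : G.Adj r s) (h4' : G.Adj s p)
    (d2 : p ≠ r) (d5 : q ≠ s) : False := by
  have hc : (SimpleGraph.Walk.cons h1 (.cons h2 (.cons h3 (.cons h4' .nil)))).IsCycle := by
    have d1 := h1.ne; have d4 := h2.ne; have d6 := h3.ne; have d3 := h4'.ne'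
    simp [SimpleGraph.Walk.isCycle_def, SimpleGraph.Walk.isTrail_def, List.Nodup]
    aesop
  exact h4 _ _ hc rfl

private lemma c7F (h7 : ∀ (v : V) (c : G.Walk v v), c.IsCycle → c.length ≠ 7)
    {p0 p1 p2 p3 p4 p5 p6 : V}
    (h1 : G.Adj p0 p1) (h2 : G.Adj p1 p2) (h3 : G.Adj p2 p3) (h4 : G.Adj p3 p4)
    (h5 : G.Adj p4 p5) (h6 : G.Adj p5 p6) (h0 : G.Adj p6 p0)
    (d02 : p0 ≠ p2) (d03 : p0 ≠ p3) (d04 : p0 ≠ p4) (d05 : p0 ≠ p5)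
    (d13 : p1 ≠ p3) (d14 : p1 ≠ p4) (d15 : p1 ≠ p5) (d16 : p1 ≠ p6)
    (d24 : p2 ≠ p4) (d25 : p2 ≠ p5) (d26 : p2 ≠ p6)
    (d35 : p3 ≠ p5) (d36 : p3 ≠ p6) (d46 : p4 ≠ p6) : False := by
  have hc : (SimpleGraph.Walk.cons h1 (.cons h2 (.cons h3 (.cons h4 (.cons h5 (.cons h6
      (.cons h0 .nil))))))).IsCycle := by
    have := h1.ne; have := h2.ne; have := h3.ne; have := h4.ne; have := h5.ne
    have := h6.ne; have := h0.ne'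
    simp [SimpleGraph.Walk.isCycle_def, SimpleGraph.Walk.isTrail_def, List.Nodup]
    aesop
  exact h7 _ _ hc rfl

lemma c9F (h9 : ∀ (v : V) (c : G.Walk v v), c.IsCycle → c.length ≠ 9)
    {v : ℕ → V} (h : ∀ i, G.Adj (v i) (v (i+1))) (hc : v 9 = v 0)
    (hd : ∀ i, i < 9 → ∀ j, j < 9 → v i = v j → i = j) : False := by
  have h0 := h 0; have h1 := h 1; have h2 := h 2
  have h3 := h 3; have h4 := h 4; have h5 := h 5
  have h6 := h 6; have h7 := h 7; have h8 := h 8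
  rw [hc] at h8
  have key : ∀ i j, i < 9 → j < 9 → i ≠ j → v i ≠ v j := fun i j hi hj hne he => hne (hd i hi j hj he)
  have hcyc : (Walk.cons h0 (.cons h1 (.cons h2 (.cons h3 (.cons h4 (.cons h5 (.cons h6 (.cons h7 (.cons h8 .nil))))))))).IsCycle := by
    have n01 := key 0 1 (by norm_num) (by norm_num) (by norm_num)
    have n02 := key 0 2 (by norm_num) (by norm_num) (by norm_num)
    have n03 := key 0 3 (by norm_num) (by norm_num) (by norm_num)
    have n04 := key 0 4 (by norm_num) (by norm_num) (by norm_num)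
    have n05 := key 0 5 (by norm_num) (by norm_num) (by norm_num)
    have n06 := key 0 6 (by norm_num) (by norm_num) (by norm_num)
    have n07 := key 0 7 (by norm_num) (by norm_num) (by norm_num)
    have n08 := key 0 8 (by norm_num) (by norm_num) (by norm_num)
    have n12 := key 1 2 (by norm_num) (by norm_num) (by norm_num)
    have n13 := key 1 3 (by norm_num) (by norm_num) (by norm_num)
    have n14 := key 1 4 (by norm_num) (by norm_num) (by norm_num)
    have n15 := key 1 5 (by norm_num) (by norm_num) (by norm_num)
    have n16 := key 1 6 (by norm_num) (by norm_num) (by norm_num)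
    have n17 := key 1 7 (by norm_num) (by norm_num) (by norm_num)
    have n18 := key 1 8 (by norm_num) (by norm_num) (by norm_num)
    have n23 := key 2 3 (by norm_num) (by norm_num) (by norm_num)
    have n24 := key 2 4 (by norm_num) (by norm_num) (by norm_num)
    have n25 := key 2 5 (by norm_num) (by norm_num) (by norm_num)
    have n26 := key 2 6 (by norm_num) (by norm_num) (by norm_num)
    have n27 := key 2 7 (by norm_num) (by norm_num) (by norm_num)
    have n28 := key 2 8 (by norm_num) (by norm_num) (by norm_num)
    have n34 := key 3 4 (by norm_num) (by norm_num) (by norm_num)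
    have n35 := key 3 5 (by norm_num) (by norm_num) (by norm_num)
    have n36 := key 3 6 (by norm_num) (by norm_num) (by norm_num)
    have n37 := key 3 7 (by norm_num) (by norm_num) (by norm_num)
    have n38 := key 3 8 (by norm_num) (by norm_num) (by norm_num)
    have n45 := key 4 5 (by norm_num) (by norm_num) (by norm_num)
    have n46 := key 4 6 (by norm_num) (by norm_num) (by norm_num)
    have n47 := key 4 7 (by norm_num) (by norm_num) (by norm_num)
    have n48 := key 4 8 (by norm_num) (by norm_num) (by norm_num)
    have n56 := key 5 6 (by norm_num) (by norm_num) (by norm_num)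
    have n57 := key 5 7 (by norm_num) (by norm_num) (by norm_num)
    have n58 := key 5 8 (by norm_num) (by norm_num) (by norm_num)
    have n67 := key 6 7 (by norm_num) (by norm_num) (by norm_num)
    have n68 := key 6 8 (by norm_num) (by norm_num) (by norm_num)
    have n78 := key 7 8 (by norm_num) (by norm_num) (by norm_num)
    simp [Walk.isCycle_def, Walk.isTrail_def, List.Nodup]
    aesop
  exact h9 _ _ hcyc rfl

lemma apply53' (h53 : ∀ (a b : V) (c₁ : G.Walk a a) (c₂ : G.Walk b b),
      c₁.IsCycle → c₁.length = 5 → c₂.IsCycle → c₂.length = 3 → ¬ NormAdjWalks G c₁ c₂)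
    {x y z p q r : V}
    (hxy : G.Adj x y) (hyz : G.Adj y z) (hzx : G.Adj z x)
    (hzp : G.Adj z p) (hpq : G.Adj p q) (hqr : G.Adj q r) (hry : G.Adj r y)
    (nyp : y ≠ p) (nyq : y ≠ q) (nyr : y ≠ r)
    (nzp : z ≠ p) (nzq : z ≠ q) (nzr : z ≠ r) (npq : p ≠ q) (npr : p ≠ r) (nqr : q ≠ r)
    (nxp : x ≠ p) (nxq : x ≠ q) (nxr : x ≠ r) : False := by
  have nyz := hyz.ne
  have nxy := hxy.ne
  have nzx := hzx.ne
  apply h53 y y (.cons hyz (.cons hzp (.cons hpq (.cons hqr (.cons hry .nil)))))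
    (.cons hyz (.cons hzx (.cons hxy .nil))) ?_ rfl ?_ rfl ?_
  · simp [Walk.isCycle_def, Walk.isTrail_def, List.Nodup]; aesop
  · simp [Walk.isCycle_def, Walk.isTrail_def, List.Nodup]; aesop
  · refine ⟨y, z, nyz, by simp, by simp, fun u => ?_⟩
    simp only [Walk.support_cons, Walk.support_nil, List.mem_cons, List.not_mem_nil, or_false]
    constructor
    · rintro ⟨hu1, hu2⟩
      rcases hu1 with rfl|rfl|rfl|rfl|rfl|rfl <;> aesop
    · rintro (rfl|rfl) <;> simp
lemma hex0 (h4 : ∀ (v : V) (c : G.Walk v v), c.IsCycle → c.length ≠ 4)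
    (h7 : ∀ (v : V) (c : G.Walk v v), c.IsCycle → c.length ≠ 7)
    (h53 : ∀ (a b : V) (c₁ : G.Walk a a) (c₂ : G.Walk b b),
      c₁.IsCycle → c₁.length = 5 → c₂.IsCycle → c₂.length = 3 → ¬ NormAdjWalks G c₁ c₂)
    {a b c y2 y3 y4 y5 : V}
    (hab : G.Adj a b) (hbc : G.Adj b c) (hca : G.Adj c a)
    (e2 : G.Adj a y2) (e3 : G.Adj y2 y3) (e4 : G.Adj y3 y4) (e5 : G.Adj y4 y5) (e6 : G.Adj y5 b)
    (nb2 : b ≠ y2) (nb3 : b ≠ y3) (nb4 : b ≠ y4) (nb5 : b ≠ y5)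
    (na2 : a ≠ y2) (na3 : a ≠ y3) (na4 : a ≠ y4) (na5 : a ≠ y5)
    (n23 : y2 ≠ y3) (n24 : y2 ≠ y4) (n25 : y2 ≠ y5) (n34 : y3 ≠ y4) (n35 : y3 ≠ y5)
    (n45 : y4 ≠ y5) : False := by
  by_cases hc2 : c = y2
  · subst hc2
    exact apply53' h53 hab hbc hca e3 e4 e5 e6 nb3 nb4 nb5 n23 n24 n25 n34 n35 n45 na3 na4 na5
  by_cases hc5 : c = y5
  · subst hc5
    exact apply53' h53 hbc hca hab e2 e3 e4 e5 (fun h => n25 h.symm) (fun h => n35 h.symm)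
      (fun h => n45 h.symm) na2 na3 na4 n23 n24 n34 nb2 nb3 nb4
  by_cases hc3 : c = y3
  · subst hc3
    exact c4F h4 e6.symm e5.symm e4.symm hbc.symm nb4 (fun h => n35 h.symm)
  by_cases hc4 : c = y4
  · subst hc4
    exact c4F h4 e2 e3 e4 hca na3 (fun h => n24 h)
  · exact c7F h7 hbc hca e2 e3 e4 e5 e6 hab.ne' nb2 nb3 nb4 hc2 hc3 hc4 hc5 na3 na4 na5 n24 n25 n35

set_option maxHeartbeats 1000000 in
lemma core (h4 : ∀ (v : V) (c : G.Walk v v), c.IsCycle → c.length ≠ 4)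
    (h7 : ∀ (v : V) (c : G.Walk v v), c.IsCycle → c.length ≠ 7)
    (h9 : ∀ (v : V) (c : G.Walk v v), c.IsCycle → c.length ≠ 9)
    (h53 : ∀ (a b : V) (c₁ : G.Walk a a) (c₂ : G.Walk b b),
      c₁.IsCycle → c₁.length = 5 → c₂.IsCycle → c₂.length = 3 → ¬ NormAdjWalks G c₁ c₂)
    {a b c : V} (hab : G.Adj a b) (hbc : G.Adj b c) (hca : G.Adj c a)
    (w : ℕ → V)
    (hper : ∀ i, w (i + 9) = w i)
    (hadj : ∀ i, G.Adj (w i) (w (i + 1)))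
    (hw0 : w 0 = b) (hw1 : w 1 = a)
    (hnb : ∀ i, w i ≠ w (i + 2))
    (hdart : ∀ i, i < 9 → ∀ j, j < 9 → w i = w j → w (i+1) = w (j+1) → i = j)
    (hE1 : ∀ i, ¬ (w i = b ∧ w (i+1) = a ∧ w (i+2) = c))
    (hE2 : ∀ i, ¬ (w i = c ∧ w (i+1) = b ∧ w (i+2) = a))
    (hE3 : ∀ i, ¬ (w i = a ∧ w (i+1) = c ∧ w (i+2) = b)) : False := by
  subst hw0 hw1
  have hne1 : ∀ i, w i ≠ w (i + 1) := fun i => (hadj i).ne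
  have C4 : ∀ p q r s : V, G.Adj p q → G.Adj q r → G.Adj r s → G.Adj s p →
      p ≠ r → q ≠ s → False := fun p q r s a1 a2 a3 a4 b1 b2 => c4F h4 a1 a2 a3 a4 b1 b2
  have hgap4 : ∀ i, w i ≠ w (i + 4) := by
    intro i he
    refine C4 (w i) (w (i+1)) (w (i+2)) (w (i+3)) (hadj i) (hadj (i+1)) (hadj (i+2)) ?_ (hnb i) ?_
    · have := hadj (i+3)
      rwa [show i+3+1 = i+4 from by ring, ← he] at this
    · have := hnb (i+1); rwa [show i+1+2 = i+3 from by ring] at this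
  have hp9 : w 9 = w 0 := by simpa using hper 0
  have hp10 : w 10 = w 1 := by simpa using hper 1
  have hp11 : w 11 = w 2 := by simpa using hper 2
  have hcls2 : ∀ i j, i < j → j < 9 → w i = w j →
      (j = i + 3 ∧ w i = w (i+3)) ∨ (j = i + 6 ∧ w j = w (j+3)) := by
    intro i j hij hj he
    obtain ⟨d, rfl⟩ : ∃ d, j = i + d := ⟨j - i, by omega⟩
    have hd1 : 1 ≤ d := by omega
    have hd8 : d ≤ 8 := by omega
    interval_cases d
    · exact absurd he (hne1 i)
    · exact absurd he (hnb i)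
    · exact Or.inl ⟨rfl, he⟩
    · exact absurd he (hgap4 i)
    · exact absurd (show w (i+5) = w (i+5+4) from by
        rw [show i+5+4 = i+9 from by ring, hper]; exact he.symm).symm (Ne.symm (hgap4 (i+5)))
    · refine Or.inr ⟨rfl, ?_⟩
      rw [show i+6+3 = i+9 from by ring, hper]; exact he.symm
    · exact absurd (show w (i+7) = w (i+7+2) from by
        rw [show i+7+2 = i+9 from by ring, hper]; exact he.symm) (hnb (i+7))
    · exact absurd (show w (i+8) = w (i+8+1) from by
        rw [show i+8+1 = i+9 from by ring, hper]; exact he.symm) (hne1 (i+8))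
  by_cases hrep : ∃ l, l < 9 ∧ w l = w (l + 3)
  case neg =>
    refine c9F h9 hadj hp9 ?_
    intro i hi j hj he
    by_contra hne
    rcases Nat.lt_or_ge i j with h | h
    · rcases hcls2 i j h hj he with ⟨_, hQ⟩ | ⟨_, hQ⟩
      · exact hrep ⟨i, by omega, hQ⟩
      · exact hrep ⟨j, hj, hQ⟩
    · have h' : j < i := by omega
      rcases hcls2 j i h' hi he.symm with ⟨_, hQ⟩ | ⟨_, hQ⟩
      · exact hrep ⟨j, by omega, hQ⟩
      · exact hrep ⟨i, hi, hQ⟩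
  case pos =>
  obtain ⟨k, hk9, hQk⟩ := hrep
  have notQ0 : ¬ w 0 = w 3 := by
    intro h0
    have hw2c : w 2 ≠ c := fun hcc => hE1 0 ⟨rfl, rfl, hcc⟩
    refine C4 (w 1) c (w 0) (w 2) hca.symm hbc.symm ?_ (hadj 1).symm (hadj 0).ne' ?_
    · have := hadj 2; rw [show (2:ℕ)+1 = 3 from rfl, ← h0] at this; exact this.symm
    · exact fun h => hw2c h.symm
  have notQ7 : ¬ w 7 = w 10 := by
    intro h7'
    have ha7 : w 7 = w 1 := h7'.trans hp10
    have hw8c : w 8 ≠ c := fun hcc => hE2 8 ⟨hcc, hp9, hp10⟩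
    refine C4 (w 1) c (w 0) (w 8) hca.symm hbc.symm ?_ ?_ (hadj 0).ne' ?_
    · have := hadj 8; rw [show (8:ℕ)+1 = 9 from rfl, hp9] at this; exact this.symm
    · have := hadj 7; rw [ha7] at this; exact this.symm
    · exact fun h => hw8c h.symm
  have notQ8 : ¬ w 8 = w 11 := by
    intro h8'
    have h82 : w 8 = w 2 := h8'.trans hp11
    have hw2c : w 2 ≠ c := fun hcc => hE1 0 ⟨rfl, rfl, hcc⟩
    refine C4 (w 1) c (w 0) (w 2) hca.symm hbc.symm ?_ (hadj 1).symm (hadj 0).ne' ?_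
    · have := hadj 8; rw [show (8:ℕ)+1 = 9 from rfl, hp9, h82] at this; exact this.symm
    · exact fun h => hw2c h.symm
  have hpair : ∀ i j, 1 ≤ i → i < j → j ≤ 6 → w i = w (i+3) → w j = w (j+3) → False := by
    intro i j h1 h2 h3 Qi Qj
    have hi5 : i ≤ 5 := by omega
    interval_cases i <;> interval_cases j
    · exact absurd (hdart 1 (by norm_num) 4 (by norm_num) Qi Qj) (by norm_num)
    · refine C4 (w 2) (w 1) (w 5) (w 3) (hadj 1).symm ?_ ?_ (hadj 2).symm ?_ (hnb 1)
      · have := hadj 4; rwa [← Qi] at this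
      · have := hadj 5; rwa [← Qj] at this
      · exact fun h => absurd (hdart 1 (by norm_num) 4 (by norm_num) Qi h) (by norm_num)
    · exact notQ7 ((Qj.symm.trans Qi.symm).trans hp10.symm)
    · have hw5c : w 5 ≠ c := fun hcc => hE2 8 ⟨Qj.symm.trans hcc, hp9, hp10⟩
      refine C4 (w 1) c (w 0) (w 5) hca.symm hbc.symm ?_ ?_ (hadj 0).ne' (fun h => hw5c h.symm)
      · have := hadj 8; rw [show (8:ℕ)+1 = 9 from rfl, hp9, ← Qj] at this; exact this.symm
      · have := hadj 4; rw [← Qi] at this; exact this.symm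
    · have hw5c : w 5 ≠ c := fun hcc => hE3 4 ⟨Qi.symm, hcc, Qj.trans hp9⟩
      refine C4 (w 1) c (w 0) (w 5) hca.symm hbc.symm ?_ ?_ (hadj 0).ne' (fun h => hw5c h.symm)
      · have := hadj 5; rw [show (5:ℕ)+1 = 6 from rfl, Qj.trans hp9] at this; exact this.symm
      · have := hadj 4; rw [← Qi] at this; exact this.symm
    · exact absurd (hdart 2 (by norm_num) 5 (by norm_num) Qi Qj) (by norm_num)
    · refine C4 (w 3) (w 2) (w 6) (w 4) (hadj 2).symm ?_ ?_ (hadj 3).symm ?_ (hnb 2)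
      · have := hadj 5; rwa [← Qi] at this
      · have := hadj 6; rwa [← Qj] at this
      · exact fun h => absurd (hdart 2 (by norm_num) 5 (by norm_num) Qi h) (by norm_num)
    · exact notQ8 ((Qj.symm.trans Qi.symm).trans hp11.symm)
    · have hw2c : w 2 ≠ c := fun hcc => hE1 0 ⟨rfl, rfl, hcc⟩
      refine C4 (w 1) c (w 0) (w 2) hca.symm hbc.symm ?_ (hadj 1).symm (hadj 0).ne' (fun h => hw2c h.symm)
      · have := hadj 5; rw [← Qi, show (5:ℕ)+1 = 6 from rfl, Qj.trans hp9] at this; exact this.symm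
    · exact absurd (hdart 3 (by norm_num) 6 (by norm_num) Qi Qj) (by norm_num)
    · refine C4 (w 4) (w 3) (w 7) (w 5) (hadj 3).symm ?_ ?_ (hadj 4).symm ?_ (hnb 3)
      · have := hadj 6; rwa [← Qi] at this
      · have := hadj 7; rwa [← Qj] at this
      · exact fun h => absurd (hdart 3 (by norm_num) 6 (by norm_num) Qi h) (by norm_num)
    · exact notQ0 ((hp9.symm.trans Qj.symm).trans Qi.symm)
    · exact absurd (hdart 4 (by norm_num) 7 (by norm_num) Qi Qj) (by norm_num)
    · refine C4 (w 5) (w 4) (w 8) (w 6) (hadj 4).symm ?_ ?_ (hadj 5).symm ?_ (hnb 4)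
      · have := hadj 7; rwa [← Qi] at this
      · have := hadj 8; rwa [← Qj] at this
      · exact fun h => absurd (hdart 4 (by norm_num) 7 (by norm_num) Qi h) (by norm_num)
    · exact absurd (hdart 5 (by norm_num) 8 (by norm_num) Qi Qj) (by norm_num)
  have hk1 : 1 ≤ k ∧ k ≤ 6 := by
    have k0 : k ≠ 0 := fun h => notQ0 (by rw [h] at hQk; exact hQk)
    have k7 : k ≠ 7 := fun h => notQ7 (by rw [h] at hQk; exact hQk)
    have k8 : k ≠ 8 := fun h => notQ8 (by rw [h] at hQk; exact hQk)
    omega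
  have huniq : ∀ l, l < 9 → w l = w (l+3) → l = k := by
    intro l hl hQl
    by_contra hne
    have l0 : l ≠ 0 := fun h => notQ0 (by rw [h] at hQl; exact hQl)
    have l7 : l ≠ 7 := fun h => notQ7 (by rw [h] at hQl; exact hQl)
    have l8 : l ≠ 8 := fun h => notQ8 (by rw [h] at hQl; exact hQl)
    rcases lt_or_gt_of_ne hne with h | h
    · exact hpair l k (by omega) h (by omega) hQl hQk
    · exact hpair k l (by omega) h (by omega) hQk hQl
  have hNE : ∀ i j, i < j → j < 9 → ¬(i = k ∧ j = i + 3) → ¬(j = k ∧ j = i + 6) →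
      w i ≠ w j := by
    intro i j h1 h2 h3 h4' he
    rcases hcls2 i j h1 h2 he with ⟨hj, hQ⟩ | ⟨hj, hQ⟩
    · exact h3 ⟨huniq i (by omega) hQ, hj⟩
    · exact h4' ⟨huniq j h2 hQ, hj⟩
  obtain ⟨hk1', hk6⟩ := hk1
  interval_cases k
  · exact hex0 h4 h7 h53 hab hbc hca (by have := hadj 4; rwa [← hQk] at this) (hadj 5) (hadj 6) (hadj 7) (by have := hadj 8; rwa [show (8:ℕ)+1 = 9 from rfl, hp9] at this)
      (hNE 0 5 (by norm_num) (by norm_num) (by omega) (by omega)) (hNE 0 6 (by norm_num) (by norm_num) (by omega) (by omega)) (hNE 0 7 (by norm_num) (by norm_num) (by omega) (by omega)) (hNE 0 8 (by norm_num) (by norm_num) (by omega) (by omega)) (hNE 1 5 (by norm_num) (by norm_num) (by omega) (by omega)) (hNE 1 6 (by norm_num) (by norm_num) (by omega) (by omega)) (hNE 1 7 (by norm_num) (by norm_num) (by omega) (by omega)) (hNE 1 8 (by norm_num) (by norm_num) (by omega) (by omega)) (hNE 5 6 (by norm_num) (by norm_num) (by omega) (by omega)) (hNE 5 7 (by norm_num)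 (by norm_num) (by omega) (by omega)) (hNE 5 8 (by norm_num) (by norm_num) (by omega) (by omega)) (hNE 6 7 (by norm_num) (by norm_num) (by omega) (by omega)) (hNE 6 8 (by norm_num) (by norm_num) (by omega) (by omega)) (hNE 7 8 (by norm_num) (by norm_num) (by omega) (by omega))
  · exact hex0 h4 h7 h53 hab hbc hca (hadj 1) (by have := hadj 5; rwa [← hQk] at this) (hadj 6) (hadj 7) (by have := hadj 8; rwa [show (8:ℕ)+1 = 9 from rfl, hp9] at this)
      (hNE 0 2 (by norm_num) (by norm_num) (by omega) (by omega)) (hNE 0 6 (by norm_num) (by norm_num) (by omega) (by omega)) (hNE 0 7 (by norm_num) (by norm_num) (by omega) (by omega)) (hNE 0 8 (by norm_num) (by norm_num) (by omega) (by omega)) (hNE 1 2 (by norm_num) (by norm_num) (by omega) (by omega)) (hNE 1 6 (by norm_num) (by norm_num) (by omega) (by omega)) (hNE 1 7 (by norm_num) (by norm_num) (by omega) (by omega)) (hNE 1 8 (by norm_num) (by norm_num) (by omega) (by omega)) (hNE 2 6 (by norm_num) (by norm_num) (by omega) (by omega)) (hNE 2 7 (by norm_num) (by norm_num) (by omega)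 (by omega)) (hNE 2 8 (by norm_num) (by norm_num) (by omega) (by omega)) (hNE 6 7 (by norm_num) (by norm_num) (by omega) (by omega)) (hNE 6 8 (by norm_num) (by norm_num) (by omega) (by omega)) (hNE 7 8 (by norm_num) (by norm_num) (by omega) (by omega))
  · exact hex0 h4 h7 h53 hab hbc hca (hadj 1) (hadj 2) (by have := hadj 6; rwa [← hQk] at this) (hadj 7) (by have := hadj 8; rwa [show (8:ℕ)+1 = 9 from rfl, hp9] at this)
      (hNE 0 2 (by norm_num) (by norm_num) (by omega) (by omega)) (hNE 0 3 (by norm_num) (by norm_num) (by omega) (by omega)) (hNE 0 7 (by norm_num) (by norm_num) (by omega) (by omega)) (hNE 0 8 (by norm_num) (by norm_num) (by omega) (by omega)) (hNE 1 2 (by norm_num) (by norm_num) (by omega) (by omega)) (hNE 1 3 (by norm_num) (by norm_num) (by omega) (by omega)) (hNE 1 7 (by norm_num) (by norm_num) (by omega) (by omega)) (hNE 1 8 (by norm_num) (by norm_num) (by omega) (by omega)) (hNE 2 3 (by norm_num) (by norm_num) (by omega) (by omega)) (hNE 2 7 (by norm_num) (by norm_num) (by omega) (by omega)) (hNE 2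 8 (by norm_num) (by norm_num) (by omega) (by omega)) (hNE 3 7 (by norm_num) (by norm_num) (by omega) (by omega)) (hNE 3 8 (by norm_num) (by norm_num) (by omega) (by omega)) (hNE 7 8 (by norm_num) (by norm_num) (by omega) (by omega))
  · exact hex0 h4 h7 h53 hab hbc hca (hadj 1) (hadj 2) (hadj 3) (by have := hadj 7; rwa [← hQk] at this) (by have := hadj 8; rwa [show (8:ℕ)+1 = 9 from rfl, hp9] at this)
      (hNE 0 2 (by norm_num) (by norm_num) (by omega) (by omega)) (hNE 0 3 (by norm_num) (by norm_num) (by omega) (by omega)) (hNE 0 4 (by norm_num) (by norm_num) (by omega) (by omega)) (hNE 0 8 (by norm_num) (by norm_num) (by omega) (by omega)) (hNE 1 2 (by norm_num) (by norm_num) (by omega) (by omega)) (hNE 1 3 (by norm_num) (by norm_num) (by omega) (by omega)) (hNE 1 4 (by norm_num) (by norm_num) (by omega) (by omega)) (hNE 1 8 (by norm_num) (by norm_num) (by omega) (by omega)) (hNE 2 3 (by norm_num) (by norm_num) (by omega) (by omega)) (hNE 2 4 (by norm_num) (by norm_num) (by omega) (by omega)) (hNE 2 8 (by norm_num) (by norm_num)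 (by omega) (by omega)) (hNE 3 4 (by norm_num) (by norm_num) (by omega) (by omega)) (hNE 3 8 (by norm_num) (by norm_num) (by omega) (by omega)) (hNE 4 8 (by norm_num) (by norm_num) (by omega) (by omega))
  · exact hex0 h4 h7 h53 hab hbc hca (hadj 1) (hadj 2) (hadj 3) (hadj 4) (by have := hadj 8; rwa [show (8:ℕ)+1 = 9 from rfl, hp9, ← hQk] at this)
      (hNE 0 2 (by norm_num) (by norm_num) (by omega) (by omega)) (hNE 0 3 (by norm_num) (by norm_num) (by omega) (by omega)) (hNE 0 4 (by norm_num) (by norm_num) (by omega) (by omega)) (hNE 0 5 (by norm_num) (by norm_num) (by omega) (by omega)) (hNE 1 2 (by norm_num) (by norm_num) (by omega) (by omega)) (hNE 1 3 (by norm_num) (by norm_num) (by omega) (by omega)) (hNE 1 4 (by norm_num) (by norm_num) (by omega) (by omega)) (hNE 1 5 (by norm_num) (by norm_num) (by omega) (by omega)) (hNE 2 3 (by norm_num) (by norm_num) (by omega) (by omega)) (hNE 2 4 (by norm_num) (by norm_num) (by omega) (by omega)) (hNE 2 5 (by norm_num) (by norm_num) (by omega) (by omega)) (hNE 3 4 (by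 norm_num) (by norm_num) (by omega) (by omega)) (hNE 3 5 (by norm_num) (by norm_num) (by omega) (by omega)) (hNE 4 5 (by norm_num) (by norm_num) (by omega) (by omega))
  · exact hex0 h4 h7 h53 hab hbc hca (hadj 1) (hadj 2) (hadj 3) (hadj 4) (by have := hadj 5; rwa [show (5:ℕ)+1 = 6 from rfl, hQk.trans hp9] at this)
      (hNE 0 2 (by norm_num) (by norm_num) (by omega) (by omega)) (hNE 0 3 (by norm_num) (by norm_num) (by omega) (by omega)) (hNE 0 4 (by norm_num) (by norm_num) (by omega) (by omega)) (hNE 0 5 (by norm_num) (by norm_num) (by omega) (by omega)) (hNE 1 2 (by norm_num) (by norm_num) (by omega) (by omega)) (hNE 1 3 (by norm_num) (by norm_num) (by omega) (by omega)) (hNE 1 4 (by norm_num) (by norm_num) (by omega) (by omega)) (hNE 1 5 (by norm_num) (by norm_num) (by omega) (by omega)) (hNE 2 3 (by norm_num) (by norm_num) (by omega) (by omega)) (hNE 2 4 (by norm_num) (by norm_num) (by omega) (by omega)) (hNE 2 5 (by norm_num) (by norm_num) (by omega) (by omega)) (hNE 3 4 (by norm_num) (by norm_num) (by omega) (by omega))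 (hNE 3 5 (by norm_num) (by norm_num) (by omega) (by omega)) (hNE 4 5 (by norm_num) (by norm_num) (by omega) (by omega))

end Helpers


lemma orbit_facts {α : Type*} [Fintype α] [DecidableEq α] (P : Equiv.Perm α) (x : α) {n : ℕ}
    (hn : 2 ≤ n) (hcard : {e | P.SameCycle x e}.ncard = n) :
    (P ^ n) x = x ∧ ∀ i, i < n → ∀ j, j < n → (P ^ i) x = (P ^ j) x → i = j := by
  have hPx : P x ≠ x := by
    intro h
    have hs : {e | P.SameCycle x e} = {x} := by
      ext y
      simp only [Set.mem_setOf_eq, Set.mem_singleton_iff]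
      constructor
      · rintro ⟨k, hk⟩
        rw [Equiv.Perm.zpow_apply_eq_self_of_apply_eq_self h k] at hk
        exact hk.symm
      · rintro rfl; exact ⟨0, rfl⟩
    rw [hs, Set.ncard_singleton] at hcard
    omega
  have hx' : x ∈ P.support := mem_support.2 hPx
  have hset : {e | P.SameCycle x e} = ↑(P.cycleOf x).support := by
    ext y
    simp only [Set.mem_setOf_eq, Finset.coe_sort_coe, Finset.mem_coe,
      Equiv.Perm.mem_support_cycleOf_iff]
    exact ⟨fun h => ⟨h, hx'⟩, fun h => h.1⟩
  set c := P.cycleOf x with hc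
  have hcard' : c.support.card = n := by
    rw [hset, Set.ncard_coe_finset] at hcard
    exact hcard
  have hcyc : c.IsCycle := P.isCycle_cycleOf hPx
  have horder : orderOf c = n := by rw [hcyc.orderOf, hcard']
  have hcx : c x ≠ x := by rw [hc, P.cycleOf_apply_self]; exact hPx
  have hpows : ∀ m : ℕ, (c ^ m) x = (P ^ m) x := fun m => P.cycleOf_pow_apply_self x m
  constructor
  · rw [← hpows, ← horder, pow_orderOf_eq_one, Equiv.Perm.one_apply]
  · have key : ∀ i j, i ≤ j → j < n → (P ^ i) x = (P ^ j) x → i = j := by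
      intro i j hij hj he
      rw [← hpows, ← hpows] at he
      have hdd : (c ^ (j - i)) x = x := by
        have h2 : (c ^ i) ((c ^ (j - i)) x) = (c ^ i) x := by
          rw [← Equiv.Perm.mul_apply, ← pow_add, show i + (j - i) = j from by omega, he]
        exact (Equiv.injective _) h2
      have h1 : c ^ (j - i) = 1 := (hcyc.pow_eq_one_iff' hcx).mpr hdd
      have hdvd : orderOf c ∣ (j - i) := orderOf_dvd_of_pow_eq_one h1
      rw [horder] at hdvd
      have := Nat.eq_zero_of_dvd_of_lt hdvd
      omega
    intro i hi j hj he
    rcases le_or_gt i j with h | h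
    · exact key i j h hj he
    · exact (key j i (by omega) hi he.symm).symm

lemma faceOf_congr {V : Type*} {G : SimpleGraph V} (E : PlaneEmbedding G) {d e : G.Dart}
    (h : E.facePerm.SameCycle d e) : faceOf E d = faceOf E e :=
  Set.ext fun z => ⟨fun hz => h.symm.trans hz, fun hz => h.trans hz⟩

section DartLemmas
variable {V : Type*} {G : SimpleGraph V} [Fintype V] [DecidableEq V] [DecidableRel G.Adj]
lemma exists_dart_ne (hmin : ∀ v : V, 3 ≤ G.degree v) (u v : G.Dart) :
    ∃ e : G.Dart, e.fst = u.fst ∧ e ≠ u ∧ e ≠ v := by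
  have h3 := hmin u.fst
  have hz : ∃ z ∈ G.neighborFinset u.fst, z ≠ u.snd ∧ z ≠ v.snd := by
    by_contra h
    push_neg at h
    have hsub : G.neighborFinset u.fst ⊆ {u.snd, v.snd} := by
      intro z hz
      rcases eq_or_ne z u.snd with rfl | hne
      · simp
      · simp [h z hz hne]
    have hc := Finset.card_le_card hsub
    have : ({u.snd, v.snd} : Finset V).card ≤ 2 :=
      (Finset.card_insert_le _ _).trans (by simp)
    rw [← G.card_neighborFinset_eq_degree] at h3
    omega
  obtain ⟨z, hz, hz1, hz2⟩ := hz
  refine ⟨⟨(u.fst, z), by rwa [← SimpleGraph.mem_neighborFinset]⟩, rfl, ?_, ?_⟩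
  · intro h; exact hz1 (congrArg (fun d : G.Dart => d.snd) h)
  · intro h; exact hz2 (congrArg (fun d : G.Dart => d.snd) h)

lemma rot_fix_false (E : PlaneEmbedding G) (hmin : ∀ v : V, 3 ≤ G.degree v)
    (d : G.Dart) (h : E.rot d = d) : False := by
  obtain ⟨e, hefst, heu, _⟩ := exists_dart_ne hmin d d
  have hsc := E.rot_cyclic d e hefst.symm
  obtain ⟨i, _, hpow⟩ := hsc.exists_pow_eq'
  have hfix : ∀ m : ℕ, (E.rot ^ m) d = d := by
    intro m
    induction m with
    | zero => rfl
    | succ n ih => rw [pow_succ', Equiv.Perm.mul_apply, ih, h]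
  rw [hfix] at hpow
  exact heu hpow.symm

lemma rot_two_cycle_false (E : PlaneEmbedding G) (hmin : ∀ v : V, 3 ≤ G.degree v)
    {u v : G.Dart} (hfst : v.fst = u.fst) (hne : v ≠ u)
    (h1 : E.rot u = v) (h2 : E.rot v = u) : False := by
  obtain ⟨e, hefst, heu, hev⟩ := exists_dart_ne hmin u v
  have hsc := E.rot_cyclic u e hefst.symm
  obtain ⟨i, _, hpow⟩ := hsc.exists_pow_eq'
  have hmem : ∀ m : ℕ, (E.rot ^ m) u = u ∨ (E.rot ^ m) u = v := by
    intro m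
    induction m with
    | zero => exact Or.inl rfl
    | succ n ih =>
      rw [pow_succ', Equiv.Perm.mul_apply]
      rcases ih with h | h
      · rw [h, h1]; exact Or.inr rfl
      · rw [h, h2]; exact Or.inl rfl
  rcases hmem i with h | h <;> rw [hpow] at h
  · exact heu h
  · exact hev h
end DartLemmas

end Paper

/-- No 3-face is adjacent to a 9-face. -/
theorem statement19 {V : Type*} [Fintype V] (G : SimpleGraph V) [DecidableRel G.Adj]
    (hconn : G.Connected)
    (E : Paper.PlaneEmbedding G) (hE : E.IsPlane)
    (hmin : ∀ v : V, 3 ≤ G.degree v)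
    (h4 : Paper.NoCycleLen G 4) (h7 : Paper.NoCycleLen G 7)
    (h9 : Paper.NoCycleLen G 9) (h53 : Paper.No5CycleNormAdj3 G) :
    ∀ d1 d2 : G.Dart, Paper.faceSize E d1 = 3 → Paper.faceSize E d2 = 9 →
      ¬ Paper.FacesAdjacent E d1 d2 := by
  classical
  intro d1 d2 hs1 hs2 hFA
  obtain ⟨e1, e2, sc1, sc2, hedge⟩ := hFA
  have hface1 : {e : G.Dart | E.facePerm.SameCycle e1 e}.ncard = 3 := by
    show (Paper.faceOf E e1).ncard = 3
    rw [← Paper.faceOf_congr E sc1]; exact hs1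
  have hface2 : {e : G.Dart | E.facePerm.SameCycle e2 e}.ncard = 9 := by
    show (Paper.faceOf E e2).ncard = 9
    rw [← Paper.faceOf_congr E sc2]; exact hs2
  rcases (SimpleGraph.dart_edge_eq_iff e1 e2).1 hedge with heq | he2
  · rw [heq] at hface1
    exact absurd (hface1.symm.trans hface2) (by norm_num)
  set P := E.facePerm with hPdef
  obtain ⟨hP3, hinj3⟩ := Paper.orbit_facts P e1 (by norm_num) hface1
  obtain ⟨hP9, hinj9⟩ := Paper.orbit_facts P e2 (by norm_num) hface2
  have fpf : ∀ d : G.Dart, P d = E.rot d.symm := fun d => rfl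
  have fst_p : ∀ d : G.Dart, (P d).fst = d.snd := fun d => by
    rw [fpf d, E.fst_rot]; rfl
  have dart_eq_of : ∀ d e : G.Dart, d.fst = e.fst → d.snd = e.snd → d = e := by
    intro d e h1 h2
    apply SimpleGraph.Dart.ext
    exact Prod.ext h1 h2
  have hstep : ∀ (d : G.Dart) (i : ℕ), (P ^ (i+1)) d = P ((P ^ i) d) := fun d i => by
    rw [pow_succ', Equiv.Perm.mul_apply]
  have p2 : (P ^ 2) e1 = P (P e1) := by rw [sq, Equiv.Perm.mul_apply]
  have p3 : (P ^ 3) e1 = P ((P ^ 2) e1) := hstep e1 2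
  have hP2fst : ((P ^ 2) e1).fst = (P e1).snd := by rw [p2, fst_p]
  have hP2snd : ((P ^ 2) e1).snd = e1.fst := by rw [← fst_p ((P ^ 2) e1), ← p3, hP3]
  have hAB : G.Adj e1.fst e1.snd := e1.adj
  have hBC : G.Adj e1.snd (P e1).snd := by have := (P e1).adj; rwa [fst_p] at this
  have hCA : G.Adj (P e1).snd e1.fst := by
    have := ((P ^ 2) e1).adj; rwa [hP2fst, hP2snd] at this
  have he2' : e2 = e1.symm := by rw [he2, SimpleGraph.Dart.symm_symm]
  set w : ℕ → V := fun i => ((P ^ i) e2).fst with hwdef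
  have hsnd : ∀ i, ((P ^ i) e2).snd = w (i+1) := fun i => by
    show _ = ((P ^ (i+1)) e2).fst
    rw [hstep e2 i, fst_p]
  have hw0 : w 0 = e1.snd := by
    show ((P ^ 0) e2).fst = e1.snd
    rw [pow_zero, Equiv.Perm.one_apply, he2']
    rfl
  have hw1 : w 1 = e1.fst := by
    show ((P ^ 1) e2).fst = e1.fst
    rw [pow_one, fst_p, he2']
    rfl
  have hadjw : ∀ i, G.Adj (w i) (w (i+1)) := fun i => by
    have := ((P ^ i) e2).adj; rwa [hsnd i] at this
  have hperw : ∀ i, w (i+9) = w i := fun i => by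
    show ((P ^ (i+9)) e2).fst = ((P ^ i) e2).fst
    rw [pow_add, Equiv.Perm.mul_apply, hP9]
  have hnbw : ∀ i, w i ≠ w (i+2) := by
    intro i he
    have hPd : P ((P ^ i) e2) = ((P ^ i) e2).symm := by
      refine dart_eq_of _ _ (fst_p _) ?_
      show (P ((P ^ i) e2)).snd = ((P ^ i) e2).fst
      rw [← hstep e2 i, hsnd (i+1)]
      exact he.symm
    have hfix : E.rot ((P ^ i) e2).symm = ((P ^ i) e2).symm := (fpf _).symm.trans hPd
    exact Paper.rot_fix_false E hmin _ hfix
  have hdartw : ∀ i, i < 9 → ∀ j, j < 9 → w i = w j → w (i+1) = w (j+1) → i = j := by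
    intro i hi j hj h1 h2
    exact hinj9 i hi j hj (dart_eq_of _ _ h1 ((hsnd i).trans (h2.trans (hsnd j).symm)))
  have hE1 : ∀ i, ¬ (w i = e1.snd ∧ w (i+1) = e1.fst ∧ w (i+2) = (P e1).snd) := by
    rintro i ⟨hb', ha', hc'⟩
    have h1 : ((P ^ i) e2).symm = e1 := dart_eq_of _ _ ((hsnd i).trans ha') hb'
    have h2 : P ((P ^ i) e2) = ((P ^ 2) e1).symm := by
      refine dart_eq_of _ _ ((fst_p _).trans ((hsnd i).trans (ha'.trans hP2snd.symm))) ?_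
      show (P ((P ^ i) e2)).snd = ((P ^ 2) e1).fst
      rw [← hstep e2 i, hsnd (i+1), hP2fst]
      exact hc'
    have r1 : E.rot e1 = ((P ^ 2) e1).symm := by
      conv_lhs => rw [← h1]
      rw [← fpf]
      exact h2
    have r2 : E.rot ((P ^ 2) e1).symm = e1 := by rw [← fpf, ← p3, hP3]
    refine Paper.rot_two_cycle_false E hmin (u := e1) (v := ((P ^ 2) e1).symm)
      hP2snd ?_ r1 r2
    intro h
    exact hBC.ne' (hP2fst.symm.trans (congrArg (fun d : G.Dart => d.snd) h))
  have hE2 : ∀ i, ¬ (w i = (P e1).snd ∧ w (i+1) = e1.snd ∧ w (i+2) = e1.fst) := by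
    rintro i ⟨hb', ha', hc'⟩
    have h1 : ((P ^ i) e2).symm = P e1 :=
      dart_eq_of _ _ ((hsnd i).trans (ha'.trans (fst_p e1).symm)) hb'
    have h2 : P ((P ^ i) e2) = e1.symm := by
      refine dart_eq_of _ _ ((fst_p _).trans ((hsnd i).trans ha')) ?_
      show (P ((P ^ i) e2)).snd = e1.fst
      rw [← hstep e2 i, hsnd (i+1)]
      exact hc'
    have r1 : E.rot (P e1) = e1.symm := by
      conv_lhs => rw [← h1]
      rw [← fpf]
      exact h2
    have r2 : E.rot e1.symm = P e1 := (fpf e1).symm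
    refine Paper.rot_two_cycle_false E hmin (u := P e1) (v := e1.symm)
      (fst_p e1).symm ?_ r1 r2
    intro h
    exact hCA.ne' (congrArg (fun d : G.Dart => d.snd) h)
  have hE3 : ∀ i, ¬ (w i = e1.fst ∧ w (i+1) = (P e1).snd ∧ w (i+2) = e1.snd) := by
    rintro i ⟨hb', ha', hc'⟩
    have h1 : ((P ^ i) e2).symm = (P ^ 2) e1 :=
      dart_eq_of _ _ ((hsnd i).trans (ha'.trans hP2fst.symm))
        (hb'.trans hP2snd.symm)
    have h2 : P ((P ^ i) e2) = (P e1).symm := by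
      refine dart_eq_of _ _ ((fst_p _).trans ((hsnd i).trans ha')) ?_
      show (P ((P ^ i) e2)).snd = (P e1).fst
      rw [← hstep e2 i, hsnd (i+1), fst_p e1]
      exact hc'
    have r1 : E.rot ((P ^ 2) e1) = (P e1).symm := by
      conv_lhs => rw [← h1]
      rw [← fpf]
      exact h2
    have r2 : E.rot (P e1).symm = (P ^ 2) e1 := (fpf (P e1)).symm.trans p2.symm
    refine Paper.rot_two_cycle_false E hmin (u := (P ^ 2) e1) (v := (P e1).symm)
      hP2fst.symm ?_ r1 r2
    intro h
    exact hAB.ne'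
      ((fst_p e1).symm.trans ((congrArg (fun d : G.Dart => d.snd) h).trans hP2snd))
  exact Paper.core h4 h7 h9 h53 hAB hBC hCA w hperw hadjw hw0 hw1 hnbw hdartw hE1 hE2 hE3
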